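/- For all t, u ∈ [0,1], the limit as n → ∞ (along odd n) of K_n(t,u) is strictly positive; in particular lim_{n→∞} b_n = 1/4 and lim_{n→∞} c_n ≥ 1/2. -/

import Mathlib

open Set MeasureTheory Filter

/-- For odd `n`, the real `n`-th root of `x` (the unique `y` with `y^n = x`). -/
noncomputable def oddRoot (n : ℕ) (x : ℝ) : ℝ :=
  if 0 ≤ x then x ^ ((n:ℝ)⁻¹) else -((-x) ^ ((n:ℝ)⁻¹))

/-- `b_n = (1/ⁿ√4)^(n-1) · (1 + 2/n)`. -/
noncomputable def bseq (n : ℕ) : ℝ :=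
  (1 / oddRoot n 4) ^ (n - 1) * (1 + 2 / (n : ℝ))

/-- `c_n > 0` is defined by `c_n³ = (1/2)·∫_{-1/2}^{1/2} du/(2 + ⁿ√u)²`. -/
noncomputable def cseq (n : ℕ) : ℝ :=
  ((1 / 2) * ∫ u in (-(1/2) : ℝ)..(1/2), 1 / (2 + oddRoot n u) ^ 2) ^ ((3:ℝ)⁻¹)

/-- The kernel `K_n(t,u)`. -/
noncomputable def Kn (n : ℕ) (t u : ℝ) : ℝ :=
  (1 - bseq n * (cseq n) ^ 3 * oddRoot n (u - 1/2) *
      (oddRoot n ((u - 1/2) ^ 2) - 4) ^ 2 * oddRoot n (t - 1/2)) /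
    ((cseq n) ^ 2 * (oddRoot n (u - 1/2) + 2) ^ 2)

lemma oddRoot_zero {n : ℕ} (hn : n ≠ 0) : oddRoot n 0 = 0 := by
  have : ((n:ℝ))⁻¹ ≠ 0 := inv_ne_zero (Nat.cast_ne_zero.mpr hn)
  simp [oddRoot, Real.zero_rpow this]

lemma abs_oddRoot_le_one {n : ℕ} {x : ℝ} (hx : |x| ≤ 1) : |oddRoot n x| ≤ 1 := by
  have hc : (0:ℝ) ≤ ((n:ℝ))⁻¹ := by positivity
  rcases le_or_gt 0 x with h | h
  · rw [oddRoot, if_pos h, abs_of_nonneg (Real.rpow_nonneg h _)]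
    exact Real.rpow_le_one h (by rwa [abs_of_nonneg h] at hx) hc
  · rw [oddRoot, if_neg (not_le.mpr h), abs_neg,
      abs_of_nonneg (Real.rpow_nonneg (by linarith) _)]
    exact Real.rpow_le_one (by linarith) (by rw [abs_of_neg h] at hx; linarith) hc

lemma measurable_oddRoot (n : ℕ) : Measurable (oddRoot n) := by
  have hcont : Continuous fun x : ℝ => x ^ ((n:ℝ)⁻¹) := by
    rw [continuous_iff_continuousAt]
    intro x
    exact Real.continuousAt_rpow_const x _ (Or.inr (by positivity))
  unfold oddRoot
  exact Measurable.ite (measurableSet_le measurable_const measurable_id)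
    hcont.measurable ((hcont.comp continuous_neg).neg.measurable)

lemma tendsto_two_mul_add_one : Tendsto (fun m : ℕ => 2*m+1) atTop atTop :=
  tendsto_atTop_mono (fun m => by simp only [id]; omega) tendsto_id

lemma tendsto_rpow_inv {y : ℝ} (hy : 0 < y) :
    Tendsto (fun n : ℕ => y ^ ((n:ℝ)⁻¹)) atTop (nhds 1) := by
  have h := (Real.continuousAt_const_rpow (b := (0:ℝ)) hy.ne').tendsto
  have h2 := h.comp tendsto_inv_atTop_nhds_zero_nat
  simpa [Function.comp_def, Real.rpow_zero] using h2

lemma tendsto_oddRoot (x : ℝ) :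
    Tendsto (fun m : ℕ => oddRoot (2*m+1) x) atTop (nhds (Real.sign x)) := by
  rcases lt_trichotomy x 0 with h | h | h
  · have he : ∀ m : ℕ, oddRoot (2*m+1) x = -((-x) ^ (((2*m+1:ℕ):ℝ))⁻¹) :=
      fun m => if_neg (not_le.mpr h)
    rw [Real.sign_of_neg h]
    have := ((tendsto_rpow_inv (y := -x) (by linarith)).comp tendsto_two_mul_add_one).neg
    refine this.congr fun m => ?_
    rw [he m]
    simp [Function.comp]
  · subst h
    rw [Real.sign_zero]
    exact tendsto_const_nhds.congr fun m => (oddRoot_zero (by omega)).symm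
  · have he : ∀ m : ℕ, oddRoot (2*m+1) x = x ^ (((2*m+1:ℕ):ℝ))⁻¹ :=
      fun m => if_pos h.le
    rw [Real.sign_of_pos h]
    have := (tendsto_rpow_inv (y := x) h).comp tendsto_two_mul_add_one
    refine this.congr fun m => ?_
    rw [he m]
    simp [Function.comp]

lemma tendsto_bseq : Tendsto (fun m : ℕ => bseq (2*m+1)) atTop (nhds (1/4)) := by
  have key : ∀ m : ℕ, bseq (2*m+1)
      = (4:ℝ) ^ (-((((2*m+1:ℕ):ℝ))⁻¹) * ((2*m:ℕ):ℝ)) * (1 + 2/((2*m+1:ℕ):ℝ)) := by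
    intro m
    have h4 : oddRoot (2*m+1) 4 = (4:ℝ) ^ ((((2*m+1:ℕ)):ℝ))⁻¹ := if_pos (by norm_num)
    have hsub : 2*m+1-1 = 2*m := by omega
    rw [bseq, h4, hsub, one_div, ← Real.rpow_neg (by norm_num : (0:ℝ) ≤ 4),
      ← Real.rpow_natCast ((4:ℝ) ^ (-((((2*m+1:ℕ)):ℝ))⁻¹)) (2*m),
      ← Real.rpow_mul (by norm_num : (0:ℝ) ≤ 4)]
  have hexp : Tendsto (fun m : ℕ => -((((2*m+1:ℕ):ℝ))⁻¹) * ((2*m:ℕ):ℝ)) atTop (nhds (-1)) := by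
    have hinv : Tendsto (fun m : ℕ => (((2*m+1:ℕ):ℝ))⁻¹) atTop (nhds 0) :=
      tendsto_inv_atTop_nhds_zero_nat.comp tendsto_two_mul_add_one
    have h1 : Tendsto (fun m : ℕ => -(1 - (((2*m+1:ℕ):ℝ))⁻¹)) atTop (nhds (-1)) := by
      simpa using (tendsto_const_nhds.sub hinv).neg
    refine h1.congr fun m => ?_
    have hne : ((2*m+1:ℕ):ℝ) ≠ 0 := by positivity
    push_cast
    have hne' : (2*(m:ℝ)+1) ≠ 0 := by positivity
    field_simp
    ring
  have h4t : Tendsto (fun m : ℕ => (4:ℝ) ^ (-((((2*m+1:ℕ):ℝ))⁻¹) * ((2*m:ℕ):ℝ)))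
      atTop (nhds ((4:ℝ) ^ (-1:ℝ))) :=
    ((Real.continuousAt_const_rpow (b := (-1:ℝ)) (by norm_num : (4:ℝ) ≠ 0)).tendsto).comp hexp
  have hlin : Tendsto (fun m : ℕ => 1 + 2/((2*m+1:ℕ):ℝ)) atTop (nhds 1) := by
    have hinv : Tendsto (fun m : ℕ => (((2*m+1:ℕ):ℝ))⁻¹) atTop (nhds 0) :=
      tendsto_inv_atTop_nhds_zero_nat.comp tendsto_two_mul_add_one
    have h2 : Tendsto (fun m : ℕ => (1:ℝ) + 2 * (((2*m+1:ℕ):ℝ))⁻¹) atTop (nhds (1 + 2*0)) :=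
      tendsto_const_nhds.add (hinv.const_mul (2:ℝ))
    simpa [div_eq_mul_inv] using h2
  have := h4t.mul hlin
  rw [show ((4:ℝ) ^ (-1:ℝ)) * 1 = 1/4 by
    rw [Real.rpow_neg_one]; norm_num] at this
  exact this.congr fun m => (key m).symm

noncomputable def fstep : ℝ → ℝ := fun u => if u ≤ 0 then 1 else 1/9

lemma integral_fstep : ∫ u in (-(1/2) : ℝ)..(1/2), fstep u = 5/9 := by
  rw [intervalIntegral.integral_of_le (by norm_num : (-(1/2):ℝ) ≤ 1/2)]
  have hsplit : Ioc (-(1/2):ℝ) (1/2) = Ioc (-(1/2)) 0 ∪ Ioc 0 (1/2) :=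
    (Ioc_union_Ioc_eq_Ioc (by norm_num) (by norm_num)).symm
  have hi1 : IntegrableOn fstep (Ioc (-(1/2):ℝ) 0) volume := by
    refine (integrableOn_const (C := (1:ℝ)) measure_Ioc_lt_top.ne).congr_fun
      (fun x hx => ?_) measurableSet_Ioc
    simp [fstep, hx.2]
  have hi2 : IntegrableOn fstep (Ioc (0:ℝ) (1/2)) volume := by
    refine (integrableOn_const (C := (1/9:ℝ)) measure_Ioc_lt_top.ne).congr_fun
      (fun x hx => ?_) measurableSet_Ioc
    simp [fstep, not_le.mpr hx.1]
  rw [hsplit, setIntegral_union (Ioc_disjoint_Ioc_of_le le_rfl) measurableSet_Ioc hi1 hi2]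
  have e1 : ∫ u in Ioc (-(1/2):ℝ) 0, fstep u = ∫ _u in Ioc (-(1/2):ℝ) 0, (1:ℝ) :=
    setIntegral_congr_fun measurableSet_Ioc (fun x hx => by simp [fstep, hx.2])
  have e2 : ∫ u in Ioc (0:ℝ) (1/2), fstep u = ∫ _u in Ioc (0:ℝ) (1/2), (1/9:ℝ) :=
    setIntegral_congr_fun measurableSet_Ioc (fun x hx => by simp [fstep, not_le.mpr hx.1])
  rw [e1, e2, setIntegral_const, setIntegral_const, Real.volume_real_Ioc_of_le (by norm_num),
    Real.volume_real_Ioc_of_le (by norm_num)]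
  norm_num

lemma aux_tendsto_integral :
    Tendsto (fun m : ℕ => ∫ u in (-(1/2) : ℝ)..(1/2), 1 / (2 + oddRoot (2*m+1) u) ^ 2)
      atTop (nhds (5/9)) := by
  rw [← integral_fstep]
  refine intervalIntegral.tendsto_integral_filter_of_dominated_convergence
    (fun _ => (1:ℝ)) ?_ ?_ intervalIntegrable_const ?_
  · exact Eventually.of_forall fun m =>
      (Measurable.div measurable_const
        (((measurable_const.add (measurable_oddRoot _)).pow_const 2))).aestronglyMeasurable
  · refine Eventually.of_forall fun m => Eventually.of_forall fun x hx => ?_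
    have hx' : |x| ≤ 1 := by
      rw [uIoc_of_le (by norm_num : (-(1/2):ℝ) ≤ 1/2)] at hx
      rw [abs_le]; constructor <;> [linarith [hx.1]; linarith [hx.2]]
    have hr := abs_oddRoot_le_one (n := 2*m+1) hx'
    have h1 : (1:ℝ) ≤ 2 + oddRoot (2*m+1) x := by
      have := (abs_le.mp hr).1; linarith
    have h2 : (1:ℝ) ≤ (2 + oddRoot (2*m+1) x) ^ 2 := by nlinarith
    rw [Real.norm_eq_abs, abs_of_nonneg (by positivity)]
    rw [div_le_one (by linarith)]
    linarith
  · have h0 : ∀ᵐ x : ℝ, x ≠ 0 := by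
      rw [ae_iff]
      simp only [not_ne_iff]
      simpa [Set.setOf_eq_eq_singleton] using measure_singleton (0:ℝ)
    filter_upwards [h0] with x hx _hmem
    have hR := tendsto_oddRoot x
    rcases hx.lt_or_gt with h | h
    · rw [Real.sign_of_neg h] at hR
      have hden : Tendsto (fun m : ℕ => (2 + oddRoot (2*m+1) x) ^ 2) atTop
          (nhds ((2 + (-1:ℝ)) ^ 2)) := ((tendsto_const_nhds.add hR).pow 2)
      have hinv := hden.inv₀ (by norm_num)
      have hf : fstep x = ((2 + (-1:ℝ)) ^ 2)⁻¹ := by norm_num [fstep, h.le]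
      rw [hf]
      exact hinv.congr fun m => (one_div _).symm
    · rw [Real.sign_of_pos h] at hR
      have hden : Tendsto (fun m : ℕ => (2 + oddRoot (2*m+1) x) ^ 2) atTop
          (nhds ((2 + (1:ℝ)) ^ 2)) := ((tendsto_const_nhds.add hR).pow 2)
      have hinv := hden.inv₀ (by norm_num)
      have hf : fstep x = ((2 + (1:ℝ)) ^ 2)⁻¹ := by norm_num [fstep, not_le.mpr h]
      rw [hf]
      exact hinv.congr fun m => (one_div _).symm

lemma tendsto_cseq :
    Tendsto (fun m : ℕ => cseq (2*m+1)) atTop (nhds ((5/18:ℝ) ^ ((3:ℝ)⁻¹))) := by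
  have h1 : Tendsto
      (fun m : ℕ => (1/2 : ℝ) * ∫ u in (-(1/2) : ℝ)..(1/2), 1 / (2 + oddRoot (2*m+1) u) ^ 2)
      atTop (nhds (5/18)) := by
    rw [show (5/18:ℝ) = (1/2) * (5/9) by norm_num]
    exact aux_tendsto_integral.const_mul (1/2 : ℝ)
  have hcont : ContinuousAt (fun y : ℝ => y ^ ((3:ℝ)⁻¹)) (5/18) :=
    Real.continuousAt_rpow_const _ _ (Or.inr (by norm_num))
  exact hcont.tendsto.comp h1

lemma sign_mem {x : ℝ} : Real.sign x = -1 ∨ Real.sign x = 0 ∨ Real.sign x = 1 := by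
  rcases lt_trichotomy x 0 with h | h | h
  · exact Or.inl (Real.sign_of_neg h)
  · exact Or.inr (Or.inl (by rw [h, Real.sign_zero]))
  · exact Or.inr (Or.inr (Real.sign_of_pos h))

theorem stmt_11 :
    (∀ t ∈ Icc (0:ℝ) 1, ∀ u ∈ Icc (0:ℝ) 1,
      ∃ L : ℝ, 0 < L ∧ Tendsto (fun m : ℕ => Kn (2 * m + 1) t u) atTop (nhds L)) ∧
    Tendsto (fun m : ℕ => bseq (2 * m + 1)) atTop (nhds (1 / 4)) ∧
    (∃ cL : ℝ, Tendsto (fun m : ℕ => cseq (2 * m + 1)) atTop (nhds cL) ∧ (1:ℝ)/2 ≤ cL) := by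
  set cL : ℝ := (5/18:ℝ) ^ ((3:ℝ)⁻¹) with hcL
  have hcL_pos : 0 < cL := Real.rpow_pos_of_pos (by norm_num) _
  have hcL3 : cL ^ (3:ℕ) = 5/18 := by
    rw [hcL, ← Real.rpow_natCast ((5/18:ℝ) ^ ((3:ℝ)⁻¹)) 3,
      ← Real.rpow_mul (by norm_num : (0:ℝ) ≤ 5/18)]
    norm_num
  have hcL_half : (1:ℝ)/2 ≤ cL := by
    have h8 : ((1:ℝ)/2) = (1/8:ℝ) ^ ((3:ℝ)⁻¹) := by
      rw [show (1/8:ℝ) = ((1/2:ℝ)) ^ (3:ℕ) by norm_num,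
        ← Real.rpow_natCast ((1/2:ℝ)) 3, ← Real.rpow_mul (by norm_num : (0:ℝ) ≤ 1/2)]
      norm_num
    rw [h8, hcL]
    exact Real.rpow_le_rpow (by norm_num) (by norm_num) (by norm_num)
  refine ⟨?_, tendsto_bseq, ⟨cL, tendsto_cseq, hcL_half⟩⟩
  intro t _ht u _hu
  have hA := tendsto_oddRoot (u - 1/2)
  have hB := tendsto_oddRoot ((u - 1/2) ^ 2)
  have hC := tendsto_oddRoot (t - 1/2)
  set a : ℝ := Real.sign (u - 1/2)
  set b' : ℝ := Real.sign ((u - 1/2) ^ 2)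
  set c' : ℝ := Real.sign (t - 1/2)
  set Nl : ℝ := 1 - (1/4) * cL ^ 3 * a * (b' - 4) ^ 2 * c' with hNl
  set Dl : ℝ := cL ^ 2 * (a + 2) ^ 2 with hDl
  have ha1 : -1 ≤ a := by rcases sign_mem (x := u - 1/2) with h|h|h <;> simp [a, h]
  have hDl_pos : 0 < Dl := by
    have : (1:ℝ) ≤ a + 2 := by linarith
    have h2 : (0:ℝ) < (a + 2) ^ 2 := by positivity
    exact mul_pos (by positivity) h2
  have hNl_pos : 0 < Nl := by
    rw [hNl, hcL3]
    rcases eq_or_ne u (1/2) with h | h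
    · have : a = 0 := by simp [a, h, Real.sign_zero]
      rw [this]; norm_num
    · have hu2 : (0:ℝ) < (u - 1/2) ^ 2 := by
        have : u - 1/2 ≠ 0 := sub_ne_zero.mpr h
        positivity
      have hb' : b' = 1 := Real.sign_of_pos hu2
      rw [hb']
      have ha : a = -1 ∨ a = 1 := by
        rcases lt_trichotomy (u - 1/2) 0 with hh | hh | hh
        · exact Or.inl (Real.sign_of_neg hh)
        · exact absurd (sub_ne_zero.mpr h) (by simp [hh, sub_eq_zero] at hh ⊢; exact hh)
        · exact Or.inr (Real.sign_of_pos hh)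
      rcases sign_mem (x := t - 1/2) with hc|hc|hc <;> rcases ha with ha|ha <;>
        rw [ha, show c' = _ from hc] <;> norm_num
  have hN : Tendsto (fun m : ℕ => 1 - bseq (2*m+1) * (cseq (2*m+1)) ^ 3 *
      oddRoot (2*m+1) (u - 1/2) * (oddRoot (2*m+1) ((u - 1/2) ^ 2) - 4) ^ 2 *
      oddRoot (2*m+1) (t - 1/2)) atTop (nhds Nl) := by
    rw [hNl]
    have h14 : Tendsto (fun m : ℕ => bseq (2*m+1)) atTop (nhds (1/4)) := tendsto_bseq
    exact tendsto_const_nhds.sub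
      ((((h14.mul (tendsto_cseq.pow 3)).mul hA).mul
        ((hB.sub tendsto_const_nhds).pow 2)).mul hC)
  have hD : Tendsto (fun m : ℕ => (cseq (2*m+1)) ^ 2 *
      (oddRoot (2*m+1) (u - 1/2) + 2) ^ 2) atTop (nhds Dl) := by
    rw [hDl]
    exact (tendsto_cseq.pow 2).mul ((hA.add tendsto_const_nhds).pow 2)
  refine ⟨Nl / Dl, div_pos hNl_pos hDl_pos, ?_⟩
  have := hN.div hD hDl_pos.ne'
  simpa only [Kn, Pi.div_def] using this
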